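/- Let ψ_{n,k} : [0,1] → ℝ^{d×d} be functions with uniform bound ‖ψ_{n,k}‖_∞ ≤ M·2^{−(n+1)/2} for some constant M, and let ξ = (ξ_{n,k}) be coefficients in ℝ^d such that for some δ ∈ (0,1) and N₀, sup_k |ξ_{n,k}| < 2^{nδ/2} for all n > N₀. Then the series Σ_{n,k} ψ_{n,k}(t)·ξ_{n,k} converges uniformly on [0,1] (hence defines a continuous function), with tail bound: the partial sums over n ≥ N differ by at most (M/√2)·Σ_{n≥N} 2^{n(δ−1)/2} in sup norm. -/

import Mathlib

open Filter

/-- If the Schauder elements `ψ_{n,k} : [0,1] → ℝ^{d×d}` (viewed as operator-valued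
functions, with at each level `n` at most `2^{n-1}` elements with pairwise disjoint
supports) satisfy the uniform bound `‖ψ_{n,k}‖_∞ ≤ M·2^{−(n+1)/2}`, and the coefficients
`ξ_{n,k} ∈ ℝ^d` satisfy `sup_k ‖ξ_{n,k}‖ < 2^{nδ/2}` for all `n > N₀` with `δ ∈ (0,1)`,
then the series `Σ_{n,k} ψ_{n,k}(t)·ξ_{n,k}` converges uniformly on `[0,1]` to a
continuous function, with the tail bound `(M/√2)·Σ_{n≥N} 2^{n(δ−1)/2}` on partial sums. -/
theorem stmt_13 {d : ℕ} (M : ℝ)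
    (ψ : ℕ → ℕ → ℝ → ((Fin d → ℝ) →L[ℝ] (Fin d → ℝ)))
    (hcont : ∀ n k, Continuous (ψ n k))
    (hbound : ∀ n k, ∀ t ∈ Set.Icc (0:ℝ) 1, ‖ψ n k t‖ ≤ M * (2:ℝ) ^ (-((n:ℝ) + 1) / 2))
    (hdisj : ∀ n t, ∀ k₁ k₂, k₁ ≠ k₂ → ψ n k₁ t = 0 ∨ ψ n k₂ t = 0)
    (ξ : ℕ → ℕ → (Fin d → ℝ))
    (δ : ℝ) (hδ : δ ∈ Set.Ioo (0:ℝ) 1) (N₀ : ℕ)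
    (hξ : ∀ n, N₀ < n → ∀ k, ‖ξ n k‖ < (2:ℝ) ^ ((n : ℝ) * δ / 2)) :
    let S : ℕ → ℝ → (Fin d → ℝ) := fun N t =>
      ∑ n ∈ Finset.range N, ∑ k ∈ Finset.range (2 ^ (n - 1)), ψ n k t (ξ n k)
    (∃ F : ℝ → (Fin d → ℝ), ContinuousOn F (Set.Icc 0 1) ∧
      TendstoUniformlyOn S F atTop (Set.Icc 0 1)) ∧
    ∀ N₁ N₂ : ℕ, N₀ < N₁ → N₁ ≤ N₂ → ∀ t ∈ Set.Icc (0:ℝ) 1,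
      ‖S N₂ t - S N₁ t‖
        ≤ M / Real.sqrt 2 * ∑' n : ℕ, (2:ℝ) ^ ((((N₁ + n : ℕ)) : ℝ) * (δ - 1) / 2) := by
  obtain ⟨hδ0, hδ1⟩ := hδ
  intro S
  set f : ℕ → ℝ → (Fin d → ℝ) :=
    fun n t => ∑ k ∈ Finset.range (2 ^ (n - 1)), ψ n k t (ξ n k) with hf
  have hM : 0 ≤ M := by
    have h0 : (0:ℝ) ∈ Set.Icc (0:ℝ) 1 := ⟨le_refl 0, zero_le_one⟩
    have h1 := (norm_nonneg (ψ 0 0 0)).trans (hbound 0 0 0 h0)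
    have h2 : (0:ℝ) < (2:ℝ) ^ (-(((0:ℕ):ℝ)) + 1 / 2) := Real.rpow_pos_of_pos two_pos _
    nlinarith [Real.rpow_pos_of_pos (show (0:ℝ) < 2 by norm_num) (-(((0:ℕ):ℝ) + 1) / 2)]
  set r : ℝ := (2:ℝ) ^ ((δ - 1) / 2) with hrdef
  have hr0 : 0 ≤ r := (Real.rpow_pos_of_pos two_pos _).le
  have hr1 : r < 1 := Real.rpow_lt_one_of_one_lt_of_neg one_lt_two (by linarith)
  set g : ℕ → ℝ := fun n => (2:ℝ) ^ ((n:ℝ) * (δ - 1) / 2) with hgdef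
  have hg : ∀ n, g n = r ^ n := by
    intro n
    show (2:ℝ) ^ ((n:ℝ) * (δ - 1) / 2) = r ^ n
    have he : ((n:ℝ)) * (δ - 1) / 2 = ((δ - 1) / 2) * (n:ℝ) := by ring
    rw [he, Real.rpow_mul (by norm_num : (0:ℝ) ≤ 2), Real.rpow_natCast]
  have hg0 : ∀ n, 0 ≤ g n := fun n => (Real.rpow_pos_of_pos two_pos _).le
  have hg_sum : Summable g :=
    (summable_geometric_of_lt_one hr0 hr1).congr fun n => (hg n).symm
  set B : ℕ → ℝ := fun n => M / Real.sqrt 2 * g n with hBdef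
  have hB0 : ∀ n, 0 ≤ B n := fun n =>
    mul_nonneg (div_nonneg hM (Real.sqrt_nonneg 2)) (hg0 n)
  have hB_sum : Summable B := hg_sum.mul_left _
  have hsqrt : Real.sqrt 2 = (2:ℝ) ^ ((1:ℝ) / 2) := Real.sqrt_eq_rpow 2
  have halg : ∀ n : ℕ, M * (2:ℝ) ^ (-((n:ℝ) + 1) / 2) * (2:ℝ) ^ ((n:ℝ) * δ / 2) = B n := by
    intro n
    rw [hBdef, mul_assoc, ← Real.rpow_add two_pos]
    have he : -((n:ℝ) + 1) / 2 + (n:ℝ) * δ / 2 = (n:ℝ) * (δ - 1) / 2 + -(1 / 2) := by ring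
    rw [he, Real.rpow_add two_pos, Real.rpow_neg (by norm_num : (0:ℝ) ≤ 2), hsqrt]
    ring
  have hkey : ∀ n, N₀ < n → ∀ t ∈ Set.Icc (0:ℝ) 1, ‖f n t‖ ≤ B n := by
    intro n hn t ht
    by_cases hex : ∃ k ∈ Finset.range (2 ^ (n - 1)), ψ n k t ≠ 0
    · obtain ⟨k₀, hk₀m, hk₀⟩ := hex
      have hsum : f n t = ψ n k₀ t (ξ n k₀) := by
        refine Finset.sum_eq_single_of_mem k₀ hk₀m fun k _ hne => ?_
        rcases hdisj n t k k₀ hne with h | h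
        · simp [h]
        · exact absurd h hk₀
      rw [hsum, ← halg n]
      calc ‖ψ n k₀ t (ξ n k₀)‖ ≤ ‖ψ n k₀ t‖ * ‖ξ n k₀‖ := (ψ n k₀ t).le_opNorm _
        _ ≤ M * (2:ℝ) ^ (-((n:ℝ) + 1) / 2) * (2:ℝ) ^ ((n:ℝ) * δ / 2) :=
            mul_le_mul (hbound n k₀ t ht) (hξ n hn k₀).le (norm_nonneg _)
              (le_trans (norm_nonneg _) (hbound n k₀ t ht))
    · push_neg at hex
      have : f n t = 0 := Finset.sum_eq_zero fun k hk => by rw [hex k hk]; simp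
      rw [this, norm_zero]
      exact hB0 n
  -- uniform bound for all n (including small n)
  set u : ℕ → ℝ := fun n =>
    if n ≤ N₀ then ∑ k ∈ Finset.range (2 ^ (n - 1)),
        M * (2:ℝ) ^ (-((n:ℝ) + 1) / 2) * ‖ξ n k‖
    else B n with hudef
  have hu_bound : ∀ n, ∀ t ∈ Set.Icc (0:ℝ) 1, ‖f n t‖ ≤ u n := by
    intro n t ht
    by_cases hn : n ≤ N₀
    · show ‖f n t‖ ≤ u n
      simp only [hudef]
      rw [if_pos hn]
      refine (norm_sum_le _ _).trans (Finset.sum_le_sum fun k _ => ?_)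
      calc ‖ψ n k t (ξ n k)‖ ≤ ‖ψ n k t‖ * ‖ξ n k‖ := (ψ n k t).le_opNorm _
        _ ≤ M * (2:ℝ) ^ (-((n:ℝ) + 1) / 2) * ‖ξ n k‖ :=
            mul_le_mul_of_nonneg_right (hbound n k t ht) (norm_nonneg _)
    · show ‖f n t‖ ≤ u n
      simp only [hudef]
      rw [if_neg hn]
      exact hkey n (lt_of_not_ge hn) t ht
  have hu_sum : Summable u := by
    rw [← summable_nat_add_iff (N₀ + 1)]
    refine (((summable_nat_add_iff (N₀ + 1)).mpr hB_sum)).congr fun n => ?_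
    simp only [hudef]
    rw [if_neg (by omega : ¬ n + (N₀ + 1) ≤ N₀)]
  have hT : TendstoUniformlyOn S (fun t => ∑' n, f n t) atTop (Set.Icc 0 1) :=
    tendstoUniformlyOn_tsum_nat hu_sum hu_bound
  have hScont : ∀ N, Continuous (S N) := by
    intro N
    apply continuous_finset_sum
    intro n _
    apply continuous_finset_sum
    intro k _
    exact (hcont n k).clm_apply continuous_const
  constructor
  · exact ⟨fun t => ∑' n, f n t,
      hT.continuousOn (Eventually.of_forall fun N => (hScont N).continuousOn).frequently, hT⟩
  · intro N₁ N₂ hN₁ hN12 t ht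
    have hsub : S N₂ t - S N₁ t = ∑ n ∈ Finset.Ico N₁ N₂, f n t := by
      rw [Finset.sum_Ico_eq_sub (fun n => f n t) hN12]
    have hsum' : Summable fun j => B (N₁ + j) :=
      ((summable_nat_add_iff N₁).mpr hB_sum).congr fun n => by rw [add_comm]
    calc ‖S N₂ t - S N₁ t‖ ≤ ∑ n ∈ Finset.Ico N₁ N₂, B n := by
          rw [hsub]
          refine (norm_sum_le _ _).trans (Finset.sum_le_sum fun n hn => ?_)
          exact hkey n (lt_of_lt_of_le hN₁ (Finset.mem_Ico.mp hn).1) t ht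
      _ = ∑ j ∈ Finset.range (N₂ - N₁), B (N₁ + j) := by rw [Finset.sum_Ico_eq_sum_range]
      _ ≤ ∑' j, B (N₁ + j) := Summable.sum_le_tsum _ (fun i _ => hB0 _) hsum'
      _ = M / Real.sqrt 2 * ∑' n : ℕ, (2:ℝ) ^ ((((N₁ + n : ℕ)) : ℝ) * (δ - 1) / 2) := by
          rw [← tsum_mul_left]
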